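/- Let 𝓛 be a summable category, i.e. a category with zero morphisms equipped with a summability structure (S, π₀, π₁, σ). Then there is a natural transformation τ_X ∈ 𝓛(S²X, S X) characterized by π₀∘τ_X = π₀∘π₀ and π₁∘τ_X = π₀∘π₁ + π₁∘π₀. Moreover τ_X∘c_X = τ_X, where c_X is the flip on S²X. -/
import Mathlib


open CategoryTheory Limits

universe v u

/-- A pre-summability structure on a category with zero morphisms: a functor `S`
together with jointly monic natural transformations `π₀, π₁ : S ⟶ 𝟭 C` and a
natural transformation `σ : S ⟶ 𝟭 C`. -/
structure PreSummability (C : Type u) [Category.{v} C] [HasZeroMorphisms C] where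
  S : C ⥤ C
  π0 : S ⟶ 𝟭 C
  π1 : S ⟶ 𝟭 C
  σ : S ⟶ 𝟭 C
  jointly_monic : ∀ {Y X : C} (f g : Y ⟶ S.obj X),
    f ≫ π0.app X = g ≫ π0.app X → f ≫ π1.app X = g ≫ π1.app X → f = g

namespace PreSummability

variable {C : Type u} [Category.{v} C] [HasZeroMorphisms C] (P : PreSummability C)

/-- Two morphisms are summable when they admit a (necessarily unique) witness. -/
def Summable {Y X : C} (f₀ f₁ : Y ⟶ X) : Prop :=
  ∃ h : Y ⟶ P.S.obj X, h ≫ P.π0.app X = f₀ ∧ h ≫ P.π1.app X = f₁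

/-- The witness `⟨f₀, f₁⟩` of a summable pair (an arbitrary value if the pair is
not summable). -/
noncomputable def witness {Y X : C} (f₀ f₁ : Y ⟶ X) : Y ⟶ P.S.obj X :=
  @dite _ (P.Summable f₀ f₁) (Classical.propDecidable _) (fun h => h.choose) (fun _ => 0)

/-- The sum `f₀ + f₁ = σ ∘ ⟨f₀, f₁⟩` of a summable pair. -/
noncomputable def sum {Y X : C} (f₀ f₁ : Y ⟶ X) : Y ⟶ X :=
  P.witness f₀ f₁ ≫ P.σ.app X

/-- Projections indexed by a boolean. -/
def pr (i : Bool) : P.S ⟶ 𝟭 C := if i then P.π1 else P.π0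

/-- Axiom (S-com): `π₁` and `π₀` are summable with `π₁ + π₀ = σ`. -/
def SCom : Prop := ∀ X : C,
  P.Summable (P.π1.app X) (P.π0.app X) ∧ P.sum (P.π1.app X) (P.π0.app X) = P.σ.app X

/-- Axiom (S-zero): `0` and `id` are summable with `0 + id = id`. -/
def SZero : Prop := ∀ X : C,
  P.Summable (0 : X ⟶ X) (𝟙 X) ∧ P.sum (0 : X ⟶ X) (𝟙 X) = 𝟙 X

/-- Axiom (S-wit): if `σ∘f₀` and `σ∘f₁` are summable then `f₀` and `f₁` are summable. -/
def SWit : Prop := ∀ (X Y : C) (f₀ f₁ : X ⟶ P.S.obj Y),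
  P.Summable (f₀ ≫ P.σ.app Y) (f₁ ≫ P.σ.app Y) → P.Summable f₀ f₁

end PreSummability

open PreSummability

namespace PreSummability

variable {C : Type u} [Category.{v} C] [HasZeroMorphisms C] (P : PreSummability C)

lemma witness_spec' {Y X : C} {f₀ f₁ : Y ⟶ X} (hs : P.Summable f₀ f₁) :
    P.witness f₀ f₁ ≫ P.π0.app X = f₀ ∧ P.witness f₀ f₁ ≫ P.π1.app X = f₁ := by
  unfold witness
  rw [dif_pos hs]
  exact hs.choose_spec

lemma witness_eq'' {Y X : C} {f₀ f₁ : Y ⟶ X} (h : Y ⟶ P.S.obj X)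
    (h0 : h ≫ P.π0.app X = f₀) (h1 : h ≫ P.π1.app X = f₁) :
    P.witness f₀ f₁ = h := by
  have hs : P.Summable f₀ f₁ := ⟨h, h0, h1⟩
  exact P.jointly_monic _ _
    (by rw [(P.witness_spec' hs).1, h0]) (by rw [(P.witness_spec' hs).2, h1])

lemma sum_eq'' {Y X : C} {f₀ f₁ : Y ⟶ X} (h : Y ⟶ P.S.obj X)
    (h0 : h ≫ P.π0.app X = f₀) (h1 : h ≫ P.π1.app X = f₁) :
    P.sum f₀ f₁ = h ≫ P.σ.app X := by
  rw [sum, P.witness_eq'' h h0 h1]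

lemma nat0 {X Y : C} (f : X ⟶ Y) :
    P.S.map f ≫ P.π0.app Y = P.π0.app X ≫ f := by
  simpa using P.π0.naturality f

lemma nat1 {X Y : C} (f : X ⟶ Y) :
    P.S.map f ≫ P.π1.app Y = P.π1.app X ≫ f := by
  simpa using P.π1.naturality f

lemma natσ {X Y : C} (f : X ⟶ Y) :
    P.S.map f ≫ P.σ.app Y = P.σ.app X ≫ f := by
  simpa using P.σ.naturality f

lemma nat00 (X : C) : P.S.map (P.π0.app X) ≫ P.π0.app X
    = P.π0.app (P.S.obj X) ≫ P.π0.app X := P.π0.naturality (P.π0.app X)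

lemma nat01 (X : C) : P.S.map (P.π1.app X) ≫ P.π0.app X
    = P.π0.app (P.S.obj X) ≫ P.π1.app X := P.π0.naturality (P.π1.app X)

lemma nat10 (X : C) : P.S.map (P.π0.app X) ≫ P.π1.app X
    = P.π1.app (P.S.obj X) ≫ P.π0.app X := P.π1.naturality (P.π0.app X)

lemma nat11 (X : C) : P.S.map (P.π1.app X) ≫ P.π1.app X
    = P.π1.app (P.S.obj X) ≫ P.π1.app X := P.π1.naturality (P.π1.app X)

lemma natσ0 (X : C) : P.S.map (P.π0.app X) ≫ P.σ.app X
    = P.σ.app (P.S.obj X) ≫ P.π0.app X := P.σ.naturality (P.π0.app X)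

lemma natσ1 (X : C) : P.S.map (P.π1.app X) ≫ P.σ.app X
    = P.σ.app (P.S.obj X) ≫ P.π1.app X := P.σ.naturality (P.π1.app X)

end PreSummability

namespace SumAux

variable {C : Type u} [Category.{v} C] [HasZeroMorphisms C] (P : PreSummability C)

/-- `ι₁ = ⟨0, id⟩`. -/
noncomputable def ι₁ (X : C) : X ⟶ P.S.obj X := P.witness (0 : X ⟶ X) (𝟙 X)

variable {P}

lemma ι₁_p0 (hcom : P.SCom) (hzero : P.SZero) (hwit : P.SWit) (X : C) : ι₁ P X ≫ P.π0.app X = 0 := (P.witness_spec' (hzero X).1).1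

lemma ι₁_p1 (hcom : P.SCom) (hzero : P.SZero) (hwit : P.SWit) (X : C) : ι₁ P X ≫ P.π1.app X = 𝟙 X := (P.witness_spec' (hzero X).1).2

lemma ι₁_σ (hcom : P.SCom) (hzero : P.SZero) (hwit : P.SWit) (X : C) : ι₁ P X ≫ P.σ.app X = 𝟙 X := by
  have h := (hzero X).2
  rw [PreSummability.sum] at h
  exact h

/-- `γ = ⟨π₁, π₀⟩`, the swap. -/
noncomputable def γ (X : C) : P.S.obj X ⟶ P.S.obj X :=
  P.witness (P.π1.app X) (P.π0.app X)

lemma γ_p0 (hcom : P.SCom) (hzero : P.SZero) (hwit : P.SWit) (X : C) : γ (P := P) X ≫ P.π0.app X = P.π1.app X :=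
  (P.witness_spec' (hcom X).1).1

lemma γ_p1 (hcom : P.SCom) (hzero : P.SZero) (hwit : P.SWit) (X : C) : γ (P := P) X ≫ P.π1.app X = P.π0.app X :=
  (P.witness_spec' (hcom X).1).2

lemma γ_σ (hcom : P.SCom) (hzero : P.SZero) (hwit : P.SWit) (X : C) : γ (P := P) X ≫ P.σ.app X = P.σ.app X := by
  have h := (hcom X).2
  rw [PreSummability.sum] at h
  exact h

/-- `ι₀ = ⟨id, 0⟩`. -/
noncomputable def ι₀ (X : C) : X ⟶ P.S.obj X := ι₁ P X ≫ γ (P := P) X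

lemma ι₀_p0 (hcom : P.SCom) (hzero : P.SZero) (hwit : P.SWit) (X : C) : ι₀ (P := P) X ≫ P.π0.app X = 𝟙 X := by
  rw [ι₀, Category.assoc, γ_p0 hcom hzero hwit, ι₁_p1 hcom hzero hwit]

lemma ι₀_p1 (hcom : P.SCom) (hzero : P.SZero) (hwit : P.SWit) (X : C) : ι₀ (P := P) X ≫ P.π1.app X = 0 := by
  rw [ι₀, Category.assoc, γ_p1 hcom hzero hwit, ι₁_p0 hcom hzero hwit]

lemma ι₀_σ (hcom : P.SCom) (hzero : P.SZero) (hwit : P.SWit) (X : C) : ι₀ (P := P) X ≫ P.σ.app X = 𝟙 X := by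
  rw [ι₀, Category.assoc, γ_σ hcom hzero hwit, ι₁_σ hcom hzero hwit]

/-- Witness of `(σ'≫π₀≫ι₀, Sπ₁)`, obtained from (S-wit). -/
noncomputable def H (X : C) : P.S.obj (P.S.obj X) ⟶ P.S.obj (P.S.obj X) :=
  P.witness (P.σ.app (P.S.obj X) ≫ P.π0.app X ≫ ι₀ (P := P) X) (P.S.map (P.π1.app X))

lemma H_summable (hcom : P.SCom) (hzero : P.SZero) (hwit : P.SWit) (X : C) :
    P.Summable (P.σ.app (P.S.obj X) ≫ P.π0.app X ≫ ι₀ (P := P) X)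
      (P.S.map (P.π1.app X)) := by
  apply hwit
  refine ⟨P.σ.app (P.S.obj X), ?_, ?_⟩
  · simp only [Functor.id_obj, Category.assoc, ι₀_σ hcom hzero hwit, Category.comp_id]
  · simp only [Functor.id_obj]
    rw [P.natσ1]

lemma H_p0 (hcom : P.SCom) (hzero : P.SZero) (hwit : P.SWit) (X : C) :
    H (P := P) X ≫ P.π0.app (P.S.obj X) =
      P.σ.app (P.S.obj X) ≫ P.π0.app X ≫ ι₀ (P := P) X :=
  (P.witness_spec' (H_summable hcom hzero hwit X)).1

lemma H_p1 (hcom : P.SCom) (hzero : P.SZero) (hwit : P.SWit) (X : C) :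
    H (P := P) X ≫ P.π1.app (P.S.obj X) = P.S.map (P.π1.app X) :=
  (P.witness_spec' (H_summable hcom hzero hwit X)).2

/-- `w1 = ⟨σ'≫π₀, π₀'≫π₁⟩`. -/
noncomputable def w1 (X : C) : P.S.obj (P.S.obj X) ⟶ P.S.obj X :=
  H (P := P) X ≫ P.S.map (P.π0.app X)

lemma w1_p0 (hcom : P.SCom) (hzero : P.SZero) (hwit : P.SWit) (X : C) :
    w1 (P := P) X ≫ P.π0.app X = P.σ.app (P.S.obj X) ≫ P.π0.app X := by
  rw [w1, Category.assoc, P.nat00, ← Category.assoc, H_p0 hcom hzero hwit]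
  simp [ι₀_p0 hcom hzero hwit]

lemma w1_p1 (hcom : P.SCom) (hzero : P.SZero) (hwit : P.SWit) (X : C) :
    w1 (P := P) X ≫ P.π1.app X = P.π0.app (P.S.obj X) ≫ P.π1.app X := by
  rw [w1, Category.assoc, P.nat10, ← Category.assoc, H_p1 hcom hzero hwit, P.nat01]

/-- `K = ⟨Sπ₀, π₀'≫π₁≫ι₁⟩`, obtained from (S-wit). -/
noncomputable def K (X : C) : P.S.obj (P.S.obj X) ⟶ P.S.obj (P.S.obj X) :=
  P.witness (P.S.map (P.π0.app X)) (P.π0.app (P.S.obj X) ≫ P.π1.app X ≫ ι₁ P X)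

lemma K_summable (hcom : P.SCom) (hzero : P.SZero) (hwit : P.SWit) (X : C) :
    P.Summable (P.S.map (P.π0.app X))
      (P.π0.app (P.S.obj X) ≫ P.π1.app X ≫ ι₁ P X) := by
  apply hwit
  refine ⟨w1 (P := P) X, ?_, ?_⟩
  · simp only [Functor.id_obj]
    rw [P.natσ0, w1_p0 hcom hzero hwit]
  · simp only [Functor.id_obj, Category.assoc, ι₁_σ hcom hzero hwit, Category.comp_id]
    rw [w1_p1 hcom hzero hwit]

lemma K_p0 (hcom : P.SCom) (hzero : P.SZero) (hwit : P.SWit) (X : C) :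
    K (P := P) X ≫ P.π0.app (P.S.obj X) = P.S.map (P.π0.app X) :=
  (P.witness_spec' (K_summable hcom hzero hwit X)).1

lemma K_p1 (hcom : P.SCom) (hzero : P.SZero) (hwit : P.SWit) (X : C) :
    K (P := P) X ≫ P.π1.app (P.S.obj X) =
      P.π0.app (P.S.obj X) ≫ P.π1.app X ≫ ι₁ P X :=
  (P.witness_spec' (K_summable hcom hzero hwit X)).2

/-- `w = ⟨π₁'≫π₀, π₀'≫π₁⟩`, the witness of the cross terms. -/
noncomputable def w (X : C) : P.S.obj (P.S.obj X) ⟶ P.S.obj X :=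
  K (P := P) X ≫ P.S.map (P.π1.app X)

lemma w_p0 (hcom : P.SCom) (hzero : P.SZero) (hwit : P.SWit) (X : C) :
    w (P := P) X ≫ P.π0.app X = P.π1.app (P.S.obj X) ≫ P.π0.app X := by
  rw [w, Category.assoc, P.nat01, ← Category.assoc, K_p0 hcom hzero hwit, P.nat10]

lemma w_p1 (hcom : P.SCom) (hzero : P.SZero) (hwit : P.SWit) (X : C) :
    w (P := P) X ≫ P.π1.app X = P.π0.app (P.S.obj X) ≫ P.π1.app X := by
  rw [w, Category.assoc, P.nat11, ← Category.assoc, K_p1 hcom hzero hwit]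
  simp [Category.assoc, ι₁_p1 hcom hzero hwit]

lemma sum_ab (hcom : P.SCom) (hzero : P.SZero) (hwit : P.SWit) (X : C) :
    P.sum (P.π1.app (P.S.obj X) ≫ P.π0.app X) (P.π0.app (P.S.obj X) ≫ P.π1.app X)
      = w (P := P) X ≫ P.σ.app X :=
  P.sum_eq'' _ (w_p0 hcom hzero hwit X) (w_p1 hcom hzero hwit X)

/-- The multiplication `τ`. -/
noncomputable def τ (X : C) : P.S.obj (P.S.obj X) ⟶ P.S.obj X :=
  K (P := P) X ≫ P.σ.app (P.S.obj X)

lemma τ_p0 (hcom : P.SCom) (hzero : P.SZero) (hwit : P.SWit) (X : C) :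
    τ (P := P) X ≫ P.π0.app X = P.π0.app (P.S.obj X) ≫ P.π0.app X := by
  have hm : K (P := P) X ≫ P.S.map (P.π0.app X) =
      P.π0.app (P.S.obj X) ≫ P.π0.app X ≫ ι₀ (P := P) X := by
    apply P.jointly_monic
    · simp only [Functor.id_obj]
      have L : (K (P := P) X ≫ P.S.map (P.π0.app X)) ≫ P.π0.app X
          = P.π0.app (P.S.obj X) ≫ P.π0.app X := by
        rw [Category.assoc, P.nat00, ← Category.assoc, K_p0 hcom hzero hwit, P.nat00]
      rw [L]
      simp [Category.assoc, ι₀_p0 hcom hzero hwit]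
    · simp only [Functor.id_obj]
      have L : (K (P := P) X ≫ P.S.map (P.π0.app X)) ≫ P.π1.app X = 0 := by
        rw [Category.assoc, P.nat10, ← Category.assoc, K_p1 hcom hzero hwit]
        simp [ι₁_p0 hcom hzero hwit]
      rw [L]
      simp [ι₀_p1 hcom hzero hwit]
  rw [τ, Category.assoc, ← P.natσ0, ← Category.assoc, hm]
  simp [Category.assoc, ι₀_σ hcom hzero hwit]

lemma τ_p1 (hcom : P.SCom) (hzero : P.SZero) (hwit : P.SWit) (X : C) :
    τ (P := P) X ≫ P.π1.app X =
      P.sum (P.π1.app (P.S.obj X) ≫ P.π0.app X)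
        (P.π0.app (P.S.obj X) ≫ P.π1.app X) := by
  rw [τ, Category.assoc, ← P.natσ1, ← Category.assoc, sum_ab hcom hzero hwit]
  rfl

lemma w_nat (hcom : P.SCom) (hzero : P.SZero) (hwit : P.SWit) {X Y : C} (f : X ⟶ Y) :
    P.S.map (P.S.map f) ≫ w (P := P) Y = w (P := P) X ≫ P.S.map f := by
  apply P.jointly_monic
  · have L : (P.S.map (P.S.map f) ≫ w (P := P) Y) ≫ P.π0.app Y
        = P.π1.app (P.S.obj X) ≫ P.π0.app X ≫ f := by
      rw [Category.assoc, w_p0 hcom hzero hwit, ← Category.assoc,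
        P.nat1 (P.S.map f), Category.assoc, P.nat0 f]
    have R : (w (P := P) X ≫ P.S.map f) ≫ P.π0.app Y
        = P.π1.app (P.S.obj X) ≫ P.π0.app X ≫ f := by
      rw [Category.assoc, P.nat0 f, ← Category.assoc,
        w_p0 hcom hzero hwit, Category.assoc]
    rw [L, R]
  · have L : (P.S.map (P.S.map f) ≫ w (P := P) Y) ≫ P.π1.app Y
        = P.π0.app (P.S.obj X) ≫ P.π1.app X ≫ f := by
      rw [Category.assoc, w_p1 hcom hzero hwit, ← Category.assoc,
        P.nat0 (P.S.map f), Category.assoc, P.nat1 f]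
    have R : (w (P := P) X ≫ P.S.map f) ≫ P.π1.app Y
        = P.π0.app (P.S.obj X) ≫ P.π1.app X ≫ f := by
      rw [Category.assoc, P.nat1 f, ← Category.assoc,
        w_p1 hcom hzero hwit, Category.assoc]
    rw [L, R]

lemma τ_nat (hcom : P.SCom) (hzero : P.SZero) (hwit : P.SWit) {X Y : C} (f : X ⟶ Y) :
    P.S.map (P.S.map f) ≫ τ (P := P) Y = τ (P := P) X ≫ P.S.map f := by
  apply P.jointly_monic
  · have L : (P.S.map (P.S.map f) ≫ τ (P := P) Y) ≫ P.π0.app Y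
        = P.π0.app (P.S.obj X) ≫ P.π0.app X ≫ f := by
      rw [Category.assoc, τ_p0 hcom hzero hwit, ← Category.assoc,
        P.nat0 (P.S.map f), Category.assoc, P.nat0 f]
    have R : (τ (P := P) X ≫ P.S.map f) ≫ P.π0.app Y
        = P.π0.app (P.S.obj X) ≫ P.π0.app X ≫ f := by
      rw [Category.assoc, P.nat0 f, ← Category.assoc,
        τ_p0 hcom hzero hwit, Category.assoc]
    rw [L, R]
  · have L : (P.S.map (P.S.map f) ≫ τ (P := P) Y) ≫ P.π1.app Y
        = w (P := P) X ≫ P.σ.app X ≫ f := by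
      rw [Category.assoc, τ_p1 hcom hzero hwit, sum_ab hcom hzero hwit,
        ← Category.assoc, w_nat hcom hzero hwit, Category.assoc, P.natσ f]
    have R : (τ (P := P) X ≫ P.S.map f) ≫ P.π1.app Y
        = w (P := P) X ≫ P.σ.app X ≫ f := by
      rw [Category.assoc, P.nat1 f, ← Category.assoc,
        τ_p1 hcom hzero hwit, sum_ab hcom hzero hwit, Category.assoc]
    rw [L, R]

end SumAux

/-- The defining equations of the monad multiplication `τ : S² ⟶ S`:
`π₀ ∘ τ = π₀ ∘ π₀` and `π₁ ∘ τ = π₀ ∘ π₁ + π₁ ∘ π₀`, together with naturality. -/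
def IsMult {C : Type u} [Category.{v} C] [HasZeroMorphisms C]
    (P : PreSummability C)
    (τ : ∀ X : C, P.S.obj (P.S.obj X) ⟶ P.S.obj X) : Prop :=
  (∀ {X Y : C} (f : X ⟶ Y), P.S.map (P.S.map f) ≫ τ Y = τ X ≫ P.S.map f) ∧
  (∀ X : C, τ X ≫ P.π0.app X = P.π0.app (P.S.obj X) ≫ P.π0.app X) ∧
  (∀ X : C, τ X ≫ P.π1.app X =
    P.sum (P.π1.app (P.S.obj X) ≫ P.π0.app X) (P.π0.app (P.S.obj X) ≫ P.π1.app X))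

theorem stmt12 {C : Type u} [Category.{v} C] [HasZeroMorphisms C]
    (P : PreSummability C) (hcom : P.SCom) (hzero : P.SZero) (hwit : P.SWit)
    (c : ∀ X : C, P.S.obj (P.S.obj X) ⟶ P.S.obj (P.S.obj X))
    (hcnat : ∀ {X Y : C} (f : X ⟶ Y),
      P.S.map (P.S.map f) ≫ c Y = c X ≫ P.S.map (P.S.map f))
    (hc : ∀ (X : C) (i j : Bool),
      c X ≫ (P.pr j).app (P.S.obj X) ≫ (P.pr i).app X =
        (P.pr i).app (P.S.obj X) ≫ (P.pr j).app X) :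
    (∃! τ : ∀ X : C, P.S.obj (P.S.obj X) ⟶ P.S.obj X, IsMult P τ) ∧
    (∀ τ : ∀ X : C, P.S.obj (P.S.obj X) ⟶ P.S.obj X, IsMult P τ →
      ∀ X : C, c X ≫ τ X = τ X) := by
  constructor
  · refine ⟨fun X => SumAux.τ (P := P) X, ⟨fun f => SumAux.τ_nat hcom hzero hwit f,
      fun X => SumAux.τ_p0 hcom hzero hwit X, fun X => SumAux.τ_p1 hcom hzero hwit X⟩,
      ?_⟩
    intro τ' h'
    funext X
    exact P.jointly_monic _ _
      (by rw [h'.2.1 X, SumAux.τ_p0 hcom hzero hwit X])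
      (by rw [h'.2.2 X, SumAux.τ_p1 hcom hzero hwit X])
  · intro τ hτ X
    have hπ0 : c X ≫ P.π0.app (P.S.obj X) ≫ P.π0.app X
        = P.π0.app (P.S.obj X) ≫ P.π0.app X := by
      have := hc X false false
      simpa [PreSummability.pr] using this
    have hb : c X ≫ P.π1.app (P.S.obj X) ≫ P.π0.app X
        = P.π0.app (P.S.obj X) ≫ P.π1.app X := by
      have := hc X false true
      simpa [PreSummability.pr] using this
    have ha : c X ≫ P.π0.app (P.S.obj X) ≫ P.π1.app X
        = P.π1.app (P.S.obj X) ≫ P.π0.app X := by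
      have := hc X true false
      simpa [PreSummability.pr] using this
    have hcw : c X ≫ SumAux.w (P := P) X
        = SumAux.w (P := P) X ≫ SumAux.γ (P := P) X := by
      apply P.jointly_monic
      · rw [Category.assoc, SumAux.w_p0 hcom hzero hwit X, hb,
          Category.assoc, SumAux.γ_p0 hcom hzero hwit X, SumAux.w_p1 hcom hzero hwit X]
      · rw [Category.assoc, SumAux.w_p1 hcom hzero hwit X, ha,
          Category.assoc, SumAux.γ_p1 hcom hzero hwit X, SumAux.w_p0 hcom hzero hwit X]
    apply P.jointly_monic
    · rw [Category.assoc, hτ.2.1 X, hπ0]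
    · rw [Category.assoc, hτ.2.2 X, SumAux.sum_ab hcom hzero hwit X,
        ← Category.assoc, hcw, Category.assoc, SumAux.γ_σ hcom hzero hwit X]
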